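/- G × K₂ is connected if and only if G is a connected non-bipartite graph. -/

import Mathlib

open SimpleGraph

universe u v

/-- Kronecker (direct / tensor) product of two simple graphs. -/
def SimpleGraph.tensor {V : Type u} {W : Type v} (G : SimpleGraph V) (H : SimpleGraph W) :
    SimpleGraph (V × W) where
  Adj p q := G.Adj p.1 q.1 ∧ H.Adj p.2 q.2
  symm := ⟨fun _ _ h => ⟨h.1.symm, h.2.symm⟩⟩
  loopless := ⟨fun _ h => G.loopless.irrefl _ h.1⟩

/-- `G × K₂`, realized on `V × Bool` (where `false` plays the role of `a` and `true` of `b`):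
`(u,x)` is adjacent to `(v,y)` iff `uv ∈ E(G)` and `x ≠ y`. -/
def timesK2 {V : Type u} (G : SimpleGraph V) : SimpleGraph (V × Bool) :=
  G.tensor ⊤

/-- `C` is (the vertex set of) a connected component of the graph `H`. -/
def IsComp {α : Type u} (H : SimpleGraph α) (C : Set α) : Prop :=
  ∃ K : H.ConnectedComponent, C = K.supp

/-- `C ⊆ V` is (the vertex set of) a connected component of the induced subgraph `G[s]`. -/
def IsCompOf {V : Type u} (G : SimpleGraph V) (s C : Set V) : Prop :=
  ∃ K : (G.induce s).ConnectedComponent, C = Subtype.val '' K.supp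

/-- `(X, Y)` is a b-pair of `G`: `X` and `Y` are disjoint, `V(G) - (X ∪ Y)` is nonempty,
`G - (X ∪ Y)` has a bipartite component `C`, and `G[V(C) ∪ {x}]` is bipartite
for each `x ∈ X`.  (Bipartite = 2-colorable.) -/
def IsBPair {V : Type u} (G : SimpleGraph V) (X Y : Set V) : Prop :=
  Disjoint X Y ∧ ((X ∪ Y)ᶜ : Set V).Nonempty ∧
    ∃ C : Set V, IsCompOf G ((X ∪ Y)ᶜ) C ∧ (G.induce C).Colorable 2 ∧
      ∀ x ∈ X, (G.induce (C ∪ {x})).Colorable 2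

/-- `b(G) = min{|X| + 2|Y| : (X,Y) is a b-pair of G}`. -/
noncomputable def bInv {V : Type u} (G : SimpleGraph V) : ℕ :=
  sInf {n | ∃ X Y : Set V, IsBPair G X Y ∧ n = X.ncard + 2 * Y.ncard}

/-- `S` is a separating set of `G`: removing `S` leaves a disconnected graph,
or a graph with at most one vertex. -/
def IsSeparating {V : Type u} (G : SimpleGraph V) (S : Set V) : Prop :=
  ¬ (G.induce Sᶜ).Connected ∨ (Sᶜ : Set V).Subsingleton

/-- The vertex connectivity `κ(G)`: the fewest number of vertices whose removal
disconnects `G` or leaves at most a single vertex. -/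
noncomputable def kappa {V : Type u} (G : SimpleGraph V) : ℕ :=
  sInf {n | ∃ S : Set V, IsSeparating G S ∧ n = S.ncard}

/-- The quotient-like graph `G*` whose vertices are the nonempty classes
`S'_u = ({u} × {a,b}) − S` (indexed by `u ∈ V(G)`), with `S'_u ~ S'_v` iff
`G × K₂ − S` has an edge with one end in `S'_u` and the other in `S'_v`. -/
def starGraph {V : Type u} (G : SimpleGraph V) (S : Set (V × Bool)) : SimpleGraph V where
  Adj u v := u ≠ v ∧ ∃ x y : Bool, (u, x) ∉ S ∧ (v, y) ∉ S ∧ (timesK2 G).Adj (u, x) (v, y)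
  symm := by
    refine ⟨?_⟩
    rintro u v ⟨h, x, y, hx, hy, hadj⟩
    exact ⟨h.symm, y, x, hy, hx, hadj.symm⟩
  loopless := ⟨fun u h => h.1 rfl⟩


section Aux

variable {V : Type u} (G : SimpleGraph V)

lemma timesK2_adj {p q : V × Bool} :
    (timesK2 G).Adj p q ↔ G.Adj p.1 q.1 ∧ p.2 ≠ q.2 := by
  constructor
  · rintro ⟨h1, h2⟩; exact ⟨h1, h2⟩
  · rintro ⟨h1, h2⟩; exact ⟨h1, h2⟩

/-- projection hom -/
def fstHom : timesK2 G →g G := ⟨Prod.fst, fun h => h.1⟩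

/-- flip hom -/
def flipHom : timesK2 G →g timesK2 G :=
  ⟨fun p => (p.1, !p.2), fun {p q} h => ⟨h.1, by
    have h2 : p.2 ≠ q.2 := h.2
    simpa using fun hc => h2 (by cases p.2 <;> cases q.2 <;> simp_all)⟩⟩

lemma lift_walk {u v : V} (w : G.Walk u v) (x : Bool) :
    ∃ y, (timesK2 G).Reachable (u, x) (v, y) := by
  induction w generalizing x with
  | nil => exact ⟨x, SimpleGraph.Reachable.refl _⟩
  | @cons a b c h p ih =>
    obtain ⟨y, hy⟩ := ih (!x)
    refine ⟨y, SimpleGraph.Reachable.trans (SimpleGraph.Adj.reachable ?_) hy⟩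
    exact (timesK2_adj G).2 ⟨h, by simp⟩

lemma const_on_walk (c : G.Coloring (Fin 2)) {p q : V × Bool}
    (h : (timesK2 G).Reachable p q) :
    (xor (decide (c p.1 = 0)) p.2) = (xor (decide (c q.1 = 0)) q.2) := by
  obtain ⟨w⟩ := h
  induction w with
  | nil => rfl
  | @cons a b d h p ih =>
    refine Eq.trans ?_ ih
    have h1 : c a.1 ≠ c b.1 := c.valid h.1
    have h2 : a.2 ≠ b.2 := h.2
    revert h1 h2
    generalize c a.1 = i; generalize c b.1 = j
    revert i j
    generalize a.2 = x; generalize b.2 = y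
    revert x y; decide

end Aux

/-- `G × K₂` is connected iff `G` is a connected non-bipartite graph. -/
theorem stmt_6 {V : Type u} [Fintype V] [Nonempty V] (G : SimpleGraph V) :
    (timesK2 G).Connected ↔ G.Connected ∧ ¬ G.Colorable 2 := by
  classical
  constructor
  · rintro hc
    refine ⟨SimpleGraph.Connected.mk fun u v => ?_, ?_⟩
    · exact (hc.preconnected (u, false) (v, false)).map (fstHom G)
    · rintro ⟨c⟩
      obtain ⟨u⟩ := ‹Nonempty V›
      have := const_on_walk G c (hc.preconnected (u, false) (u, true))
      simp at this
  · rintro ⟨hG, hnc⟩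
    obtain ⟨u₀⟩ := ‹Nonempty V›
    -- first show (u₀, false) ~ (u₀, true)
    have key : (timesK2 G).Reachable (u₀, false) (u₀, true) := by
      by_contra hcon
      -- helper: cannot reach both parities
      have helper : ∀ v : V, ¬ ((timesK2 G).Reachable (u₀, false) (v, false) ∧
          (timesK2 G).Reachable (u₀, false) (v, true)) := by
        rintro v ⟨h0, h1⟩
        have h1' : (timesK2 G).Reachable (u₀, true) (v, false) := by
          exact h1.map (flipHom G)
        exact hcon (h0.trans h1'.symm)
      have exist : ∀ v : V, (timesK2 G).Reachable (u₀, false) (v, false) ∨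
          (timesK2 G).Reachable (u₀, false) (v, true) := by
        intro v
        obtain ⟨w⟩ := hG.preconnected u₀ v
        obtain ⟨y, hy⟩ := lift_walk G w false
        cases y with
        | false => exact Or.inl hy
        | true => exact Or.inr hy
      set c : V → Bool := fun v => decide ((timesK2 G).Reachable (u₀, false) (v, true))
        with hc
      have valid : ∀ {u v : V}, G.Adj u v → c u ≠ c v := by
        intro u v hadj hcc
        by_cases hu : (timesK2 G).Reachable (u₀, false) (u, true)
        · have hcv : (timesK2 G).Reachable (u₀, false) (v, true) := by
            have : c v = true := by rw [← hcc]; simp [hc, hu]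
            simpa [hc] using this
          have hvf : (timesK2 G).Reachable (u₀, false) (v, false) :=
            hu.trans (SimpleGraph.Adj.reachable ((timesK2_adj G).2 ⟨hadj, by simp⟩))
          exact helper v ⟨hvf, hcv⟩
        · have hcv : ¬ (timesK2 G).Reachable (u₀, false) (v, true) := by
            have : c v = false := by rw [← hcc]; simp [hc, hu]
            simpa [hc] using this
          have huf : (timesK2 G).Reachable (u₀, false) (u, false) :=
            (exist u).resolve_right hu
          exact hcv (huf.trans (SimpleGraph.Adj.reachable
            ((timesK2_adj G).2 ⟨hadj, by simp⟩)))
      exact hnc (by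
        have : G.Colorable (Fintype.card Bool) :=
          (SimpleGraph.Coloring.mk c valid).colorable
        simpa using this)
    have flipAll : ∀ v : V, (timesK2 G).Reachable (v, false) (v, true) := by
      intro v
      obtain ⟨w⟩ := hG.preconnected u₀ v
      obtain ⟨y, hy⟩ := lift_walk G w false
      have hy' : (timesK2 G).Reachable (u₀, true) (v, !y) := by
        exact hy.map (flipHom G)
      cases y with
      | false => exact hy.symm.trans (key.trans (by simpa using hy'))
      | true => exact ((key.trans (by simpa using hy')).symm.trans hy)
    have : Nonempty (V × Bool) := ⟨(u₀, false)⟩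
    refine SimpleGraph.Connected.mk fun p q => ?_
    obtain ⟨u, x⟩ := p
    obtain ⟨v, y⟩ := q
    obtain ⟨w⟩ := hG.preconnected u v
    obtain ⟨z, hz⟩ := lift_walk G w x
    have hvz : (timesK2 G).Reachable (v, z) (v, y) := by
      cases z <;> cases y
      · exact SimpleGraph.Reachable.refl _
      · exact flipAll v
      · exact (flipAll v).symm
      · exact SimpleGraph.Reachable.refl _
    exact hz.trans hvz
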